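/- For every i in Z/3 the following equivalences hold in SK: a_i ~ a_{i-1} b_{i+1}, c_i ~ d_{i+1} c_{i-1}, a_i b_i ~ a_{i-1} d_{i-1}, and d_i c_i ~ b_{i-1} c_{i-1}. -/

import Mathlib

/-- The 15-letter alphabet A = {a_i, b_i, c_i, d_i, x_i : i ∈ ℤ/3}. -/
inductive Letter : Type
  | a : ZMod 3 → Letter
  | b : ZMod 3 → Letter
  | c : ZMod 3 → Letter
  | d : ZMod 3 → Letter
  | x : ZMod 3 → Letter
  deriving DecidableEq

/-- Words: the free monoid on the alphabet A. -/
abbrev Word := FreeMonoid Letter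

def a (i : ZMod 3) : Word := FreeMonoid.of (Letter.a i)
def b (i : ZMod 3) : Word := FreeMonoid.of (Letter.b i)
def c (i : ZMod 3) : Word := FreeMonoid.of (Letter.c i)
def d (i : ZMod 3) : Word := FreeMonoid.of (Letter.d i)
def x (i : ZMod 3) : Word := FreeMonoid.of (Letter.x i)

/-- t_i = b_{i+1} d_{i-1} d_{i+1} b_{i-1}. -/
def t (i : ZMod 3) : Word := b (i+1) * d (i-1) * d (i+1) * b (i-1)

/-- t'_i = d_{i-1} b_{i+1} b_{i-1} d_{i+1}. -/
def t' (i : ZMod 3) : Word := d (i-1) * b (i+1) * b (i-1) * d (i+1)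

/-- The defining relations (1)-(10) of the semigroup SK. -/
inductive SKRel : Word → Word → Prop
  | r1a (i : ZMod 3) : SKRel (a i) (a (i+1) * d (i-1))
  | r1b (i : ZMod 3) : SKRel (b i) (a (i-1) * c (i+1))
  | r1c (i : ZMod 3) : SKRel (c i) (b (i-1) * c (i+1))
  | r1d (i : ZMod 3) : SKRel (d i) (a (i+1) * c (i-1))
  | r2 (i : ZMod 3) : SKRel (x i) (d (i+1) * x (i-1) * b (i+1))
  | r3 : SKRel (d 0 * d 1 * d 2) 1
  | r4bd (i : ZMod 3) : SKRel (b i * d i) 1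
  | r4db (i : ZMod 3) : SKRel (d i * b i) 1
  | r5d (i : ZMod 3) : SKRel (d i * x i * d i) (a i * (d i * x i * d i) * c i)
  | r5b (i : ZMod 3) : SKRel (b i * x i * b i) (a i * (b i * x i * b i) * c i)
  | r6 (i : ZMod 3) :
      SKRel (x i * (d (i+1) * d i * d (i-1))) ((d (i+1) * d i * d (i-1)) * x i)
  | r7 (i : ZMod 3) (w : Word)
      (hw : w ∈ ({c (i+1), x (i+1), b i * d (i+1) * d i} : Set Word)) :
      SKRel ((d i * c i) * w) (w * (d i * c i))
  | r8 (i : ZMod 3) (w : Word)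
      (hw : w ∈ ({a (i+1), b (i+1), c (i+1), x (i+1), b i * d (i+1) * d i} : Set Word)) :
      SKRel ((a i * b i) * w) (w * (a i * b i))
  | r9 (i : ZMod 3) (w : Word)
      (hw : w ∈ ({a i, b i, c i, x i, b (i-1) * d i * d (i-1)} : Set Word)) :
      SKRel (t i * w) (w * t i)
  | r10 (i : ZMod 3) (w : Word)
      (hw : w ∈ ({a (i+1), b (i+1), c (i+1), x (i+1), b i * d (i+1) * d i} : Set Word)) :
      SKRel ((d i * x i * b i) * w) (w * (d i * x i * b i))

/-- The congruence generated by relations (1)-(10); `skCon u v` means u ~ v,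
i.e. u and v have equal images in the presented monoid SK. -/
def skCon : Con Word := conGen SKRel

lemma sk {u v : Word} (h : SKRel u v) : skCon u v := ConGen.Rel.of u v h

lemma cycShift (i : ZMod 3) (h : skCon (d i * d (i+1) * d (i+2)) 1) :
    skCon (d (i+1) * d (i+2) * d i) 1 := by
  have e1 : skCon (d (i+1) * d (i+2) * d i)
      (b i * (d i * (d (i+1) * (d (i+2) * d i)))) := by
    have := ((sk (SKRel.r4bd i)).symm).mul (skCon.refl (d (i+1) * d (i+2) * d i))
    simp [mul_assoc] at this; exact this
  have e2 : skCon (b i * (d i * (d (i+1) * (d (i+2) * d i)))) (b i * d i) := by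
    have := (skCon.refl (b i)).mul (h.mul (skCon.refl (d i)))
    simp [mul_assoc] at this; exact this
  exact (e1.trans e2).trans (sk (SKRel.r4bd i))

lemma cyc (i : ZMod 3) : skCon (d i * d (i+1) * d (i+2)) 1 := by
  have tri : ∀ j : ZMod 3, j = 0 ∨ j = 1 ∨ j = 2 := by decide
  have h0 : skCon (d 0 * d (0+1) * d (0+2)) 1 := by
    have ea : (0+1 : ZMod 3) = 1 := by decide
    have eb : (0+2 : ZMod 3) = 2 := by decide
    rw [ea, eb]; exact sk SKRel.r3
  have h1 : skCon (d 1 * d (1+1) * d (1+2)) 1 := by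
    have := cycShift 0 h0
    have ea : (0+1 : ZMod 3) = 1 := by decide
    have eb : (0+2 : ZMod 3) = 1+1 := by decide
    have ec : (0 : ZMod 3) = 1+2 := by decide
    rwa [ea, eb, ec] at this
  have h2 : skCon (d 2 * d (2+1) * d (2+2)) 1 := by
    have := cycShift 1 h1
    have ea : (1+1 : ZMod 3) = 2 := by decide
    have eb : (1+2 : ZMod 3) = 2+1 := by decide
    have ec : (1 : ZMod 3) = 2+2 := by decide
    rwa [ea, eb, ec] at this
  rcases tri i with h | h | h <;> subst h
  · exact h0
  · exact h1
  · exact h2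

lemma dd (i : ZMod 3) : skCon (d (i+1) * d (i+2)) (b i) := by
  have h1 : skCon (d (i+1) * d (i+2)) (b i * (d i * (d (i+1) * d (i+2)))) := by
    have := ((sk (SKRel.r4bd i)).symm).mul (skCon.refl (d (i+1) * d (i+2)))
    simp [mul_assoc] at this; exact this
  have h2 : skCon (b i * (d i * (d (i+1) * d (i+2)))) (b i) := by
    have := (skCon.refl (b i)).mul (cyc i)
    simp [mul_assoc] at this; exact this
  exact h1.trans h2

lemma bb (i : ZMod 3) : skCon (d i) (b (i+2) * b (i+1)) := by
  have s1 : skCon (d i) (d i * (d (i+1) * b (i+1))) := by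
    have := (skCon.refl (d i)).mul ((sk (SKRel.r4db (i+1))).symm)
    simp at this; exact this
  have s2 : skCon (d i * (d (i+1) * b (i+1)))
      (d i * (d (i+1) * (d (i+2) * (b (i+2) * b (i+1))))) := by
    have := (skCon.refl (d i * d (i+1))).mul
      (((sk (SKRel.r4db (i+2))).symm).mul (skCon.refl (b (i+1))))
    simp [mul_assoc] at this; exact this
  have s3 : skCon (d i * (d (i+1) * (d (i+2) * (b (i+2) * b (i+1)))))
      (b (i+2) * b (i+1)) := by
    have := (cyc i).mul (skCon.refl (b (i+2) * b (i+1)))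
    simp [mul_assoc] at this; exact this
  exact (s1.trans s2).trans s3

/-- (28)-(29): a_i ~ a_{i-1} b_{i+1}, c_i ~ d_{i+1} c_{i-1},
a_i b_i ~ a_{i-1} d_{i-1}, d_i c_i ~ b_{i-1} c_{i-1}. -/
theorem equiv_28_29 : ∀ i : ZMod 3,
    skCon (a i) (a (i-1) * b (i+1)) ∧
    skCon (c i) (d (i+1) * c (i-1)) ∧
    skCon (a i * b i) (a (i-1) * d (i-1)) ∧
    skCon (d i * c i) (b (i-1) * c (i-1)) := by
  intro i
  have e1 : ∀ j : ZMod 3, j - 1 + 1 = j := by decide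
  have e2 : ∀ j : ZMod 3, j - 1 - 1 = j + 1 := by decide
  have e3 : ∀ j : ZMod 3, j - 1 = j + 2 := by decide
  -- a_{i-1} ~ a_i d_{i+1}
  have ha : skCon (a (i-1)) (a i * d (i+1)) := by
    have := sk (SKRel.r1a (i-1))
    rwa [e1, e2] at this
  -- c_{i-1} ~ b_{i+1} c_i
  have hc : skCon (c (i-1)) (b (i+1) * c i) := by
    have := sk (SKRel.r1c (i-1))
    rwa [e1, e2] at this
  refine ⟨?_, ?_, ?_, ?_⟩
  · -- a i ~ a (i-1) * b (i+1)
    have h1 : skCon (a (i-1) * b (i+1)) (a i * (d (i+1) * b (i+1))) := by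
      have := ha.mul (skCon.refl (b (i+1)))
      simp [mul_assoc] at this; exact this
    have h2 : skCon (a i * (d (i+1) * b (i+1))) (a i) := by
      have := (skCon.refl (a i)).mul (sk (SKRel.r4db (i+1)))
      simp at this; exact this
    exact (h1.trans h2).symm
  · -- c i ~ d (i+1) * c (i-1)
    have h1 : skCon (d (i+1) * c (i-1)) (d (i+1) * (b (i+1) * c i)) :=
      (skCon.refl (d (i+1))).mul hc
    have h2 : skCon (d (i+1) * (b (i+1) * c i)) (c i) := by
      have := (sk (SKRel.r4db (i+1))).mul (skCon.refl (c i))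
      simp [mul_assoc] at this; exact this
    exact (h1.trans h2).symm
  · -- a i * b i ~ a (i-1) * d (i-1)
    have h1 : skCon (a (i-1) * d (i-1)) (a i * (d (i+1) * d (i+2))) := by
      have h := ha.mul (skCon.refl (d (i-1)))
      rw [e3]
      simp [mul_assoc, e3] at h; exact h
    have h2 : skCon (a i * (d (i+1) * d (i+2))) (a i * b i) :=
      (skCon.refl (a i)).mul (dd i)
    exact (h1.trans h2).symm
  · -- d i * c i ~ b (i-1) * c (i-1)
    have h1 : skCon (b (i-1) * c (i-1)) (b (i+2) * (b (i+1) * c i)) := by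
      have h := (skCon.refl (b (i-1))).mul hc
      rw [e3]
      simp [e3] at h; exact h
    have h2 : skCon (d i * c i) (b (i+2) * (b (i+1) * c i)) := by
      have := (bb i).mul (skCon.refl (c i))
      simp [mul_assoc] at this; exact this
    exact h2.trans h1.symm
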